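/- Assume (H_a), (H_B) and (H_2). Let w^in ∈ Y_1^+, w^in ≢ 0, and ρ1 ≥ ρ0 > 0 with M_1(w^in) ≤ ρ1 and M_0(w^in) ≥ ρ0. Let l_0 ≥ 1 be such that Σ_{i=l_0+1}^∞ w_i^in ≤ M_0(w^in)/2, and set δ_0 = min{ρ0/2, (ρ0/2)^{1−α} ρ1^{α}}. For l ≥ l_0 let w^l be a mass-conserving solution on [0,∞) of the truncated equation (with kernel a^l and initial condition w^{in,l}) belonging to L^∞_loc([0,∞); Y_m) for all m > 1. Then for all t ≥ 0 and l ≥ l_0: M_1(w^l(t)) = M_1(w^{in,l}) ≤ ρ1, M_0(w^l(t)) ≥ M_0(w^{in,l}) ≥ ρ0/2, and M_α(w^l(t)) ≥ δ_0 > 0. -/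

import Mathlib

open MeasureTheory

/-- The moment of order `γ` of a sequence `y = (y_i)_{i ≥ 1}`. -/
noncomputable def mom (γ : ℝ) (y : ℕ → ℝ) : ℝ :=
  ∑' n : ℕ, ((n + 1 : ℕ) : ℝ) ^ γ * y (n + 1)

/-- Membership in the space `Y_γ`. -/
def inY (γ : ℝ) (y : ℕ → ℝ) : Prop :=
  Summable fun n : ℕ => ((n + 1 : ℕ) : ℝ) ^ γ * |y (n + 1)|

/-- The gain term `(1/2) Σ_{j=i+1}^∞ Σ_{k=1}^{j-1} B_{j-k,k}^i a_{j-k,k} w_{j-k} w_k`. -/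
noncomputable def gainT (a : ℕ → ℕ → ℝ) (B : ℕ → ℕ → ℕ → ℝ)
    (w : ℕ → ℝ → ℝ) (i : ℕ) (τ : ℝ) : ℝ :=
  (1 / 2) * ∑' n : ℕ, ∑ k ∈ Finset.Ico 1 (i + 1 + n),
    B (i + 1 + n - k) k i * a (i + 1 + n - k) k * w (i + 1 + n - k) τ * w k τ

/-- The loss term `Σ_{j=1}^∞ a_{i,j} w_i w_j`. -/
noncomputable def lossT (a : ℕ → ℕ → ℝ) (w : ℕ → ℝ → ℝ) (i : ℕ) (τ : ℝ) : ℝ :=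
  ∑' n : ℕ, a i (n + 1) * w i τ * w (n + 1) τ

/-- A solution on `[0,∞)` of the discrete collision-induced breakage equation with
kernel `a`, daughter distribution `B` and initial condition `win`. -/
def IsSol (a : ℕ → ℕ → ℝ) (B : ℕ → ℕ → ℕ → ℝ) (win : ℕ → ℝ)
    (w : ℕ → ℝ → ℝ) : Prop :=
  (∀ i, 1 ≤ i → ∀ t : ℝ, 0 ≤ t → 0 ≤ w i t) ∧
  (∀ i, 1 ≤ i → ContinuousOn (w i) (Set.Ici (0 : ℝ))) ∧
  (∀ i, 1 ≤ i → w i 0 = win i) ∧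
  (∀ i, 1 ≤ i → ∀ t : ℝ, 0 < t →
    IntegrableOn (lossT a w i) (Set.Ioc 0 t) ∧
    IntegrableOn (gainT a B w i) (Set.Ioc 0 t) ∧
    w i t = win i + ∫ τ in Set.Ioc (0 : ℝ) t, (gainT a B w i τ - lossT a w i τ))

/-- Mass conservation: `M_1(w(t)) = M_1(w^in)` for all `t ≥ 0`. -/
def MassConserving (win : ℕ → ℝ) (w : ℕ → ℝ → ℝ) : Prop :=
  ∀ t : ℝ, 0 ≤ t → inY 1 (fun i => w i t) ∧ mom 1 (fun i => w i t) = mom 1 win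

/-- Hypothesis (H_B) on the daughter distribution function. -/
def HB (B : ℕ → ℕ → ℕ → ℝ) : Prop :=
  ∀ j k : ℕ, 1 ≤ j → 1 ≤ k →
    (∀ i, 0 ≤ B j k i) ∧ (∀ i, B j k i = B k j i) ∧
    (∀ i, j + k ≤ i → B j k i = 0) ∧
    (∑ i ∈ Finset.Ico 1 (j + k), (i : ℝ) * B j k i = (j : ℝ) + (k : ℝ))

/-- Hypothesis (H_m): moment damping at every order `m > 1`. -/
def Hmom (B : ℕ → ℕ → ℕ → ℝ) : Prop :=
  ∀ m : ℝ, 1 < m → ∃ ε κ : ℝ, 0 < ε ∧ ε < 1 ∧ 1 ≤ κ ∧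
    ∀ j k : ℕ, 1 ≤ j → 1 ≤ k →
      ∑ i ∈ Finset.Ico 1 (j + k), (i : ℝ) ^ m * B j k i ≤
        (1 - ε) * ((j : ℝ) ^ m + (k : ℝ) ^ m) +
          κ * ((j : ℝ) * (k : ℝ) ^ (m - 1) + (j : ℝ) ^ (m - 1) * (k : ℝ))

/-- Hypothesis (H_2): at least two fragments in each collision. -/
def H2 (B : ℕ → ℕ → ℕ → ℝ) : Prop :=
  ∀ j k : ℕ, 1 ≤ j → 1 ≤ k → 2 ≤ ∑ i ∈ Finset.Ico 1 (j + k), B j k i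

/-- The collision kernel `a_{i,j} = A (i^α j^β + i^β j^α)`. -/
noncomputable def kerA (A α β : ℝ) (i j : ℕ) : ℝ :=
  A * ((i : ℝ) ^ α * (j : ℝ) ^ β + (i : ℝ) ^ β * (j : ℝ) ^ α)

/-- The truncated collision kernel
`a^l_{i,j} = A (min{i,l}^{α₊} i^{α-α₊} j^β + i^β min{j,l}^{α₊} j^{α-α₊})`. -/
noncomputable def kerTrunc (A α β : ℝ) (l : ℕ) (i j : ℕ) : ℝ :=
  A * (((min i l : ℕ) : ℝ) ^ max α 0 * (i : ℝ) ^ (α - max α 0) * (j : ℝ) ^ β +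
       (i : ℝ) ^ β * ((min j l : ℕ) : ℝ) ^ max α 0 * (j : ℝ) ^ (α - max α 0))

/-- The truncated initial condition `w^{in,l}`. -/
def winTrunc (l : ℕ) (win : ℕ → ℝ) (i : ℕ) : ℝ := if i ≤ l then win i else 0

/-- `w ∈ L^∞_loc([0,∞); Y_m)` for every `m > 1`. -/
def LocBddMoments (w : ℕ → ℝ → ℝ) : Prop :=
  ∀ m : ℝ, 1 < m → ∀ T : ℝ, 0 < T → ∃ C : ℝ,
    ∀ t ∈ Set.Icc (0 : ℝ) T, inY m (fun i => w i t) ∧ mom m (fun i => w i t) ≤ C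

/-- `sup_{t ∈ [0,T]} M_γ(w(t)) < ∞` for each `T > 0`. -/
def BddMoment (γ : ℝ) (w : ℕ → ℝ → ℝ) : Prop :=
  ∀ T : ℝ, 0 < T → ∃ C : ℝ,
    ∀ t ∈ Set.Icc (0 : ℝ) T, inY γ (fun i => w i t) ∧ mom γ (fun i => w i t) ≤ C

/-- A stationary solution of the discrete collision-induced breakage equation. -/
def IsStationarySol (a : ℕ → ℕ → ℝ) (B : ℕ → ℕ → ℕ → ℝ) (w : ℕ → ℝ) : Prop :=
  ∀ i, 1 ≤ i →
    Summable (fun n : ℕ => ∑ k ∈ Finset.Ico 1 (i + 1 + n),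
      B (i + 1 + n - k) k i * a (i + 1 + n - k) k * w (i + 1 + n - k) * w k) ∧
    Summable (fun n : ℕ => a i (n + 1) * w i * w (n + 1)) ∧
    (1 / 2) * (∑' n : ℕ, ∑ k ∈ Finset.Ico 1 (i + 1 + n),
        B (i + 1 + n - k) k i * a (i + 1 + n - k) k * w (i + 1 + n - k) * w k) =
      ∑' n : ℕ, a i (n + 1) * w i * w (n + 1)



/-- Summability of moment sequences at lower exponents. -/
lemma auxSummable_of_le {y : ℕ → ℝ} {γ γ' : ℝ} (hγ : γ ≤ γ')
    (hy : ∀ n : ℕ, 0 ≤ y (n + 1))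
    (h : Summable fun n : ℕ => ((n + 1 : ℕ) : ℝ) ^ γ' * y (n + 1)) :
    Summable fun n : ℕ => ((n + 1 : ℕ) : ℝ) ^ γ * y (n + 1) := by
  refine Summable.of_nonneg_of_le (fun n => ?_) (fun n => ?_) h
  · have h1 : (0:ℝ) ≤ ((n + 1 : ℕ) : ℝ) ^ γ := Real.rpow_nonneg (by positivity) _
    exact mul_nonneg h1 (hy n)
  · refine mul_le_mul_of_nonneg_right ?_ (hy n)
    exact Real.rpow_le_rpow_of_exponent_le (by exact_mod_cast Nat.one_le_iff_ne_zero.mpr (by simp)) hγ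

lemma aux_mom_zero_eq (y : ℕ → ℝ) : mom 0 y = ∑' n : ℕ, y (n + 1) := by
  unfold mom
  exact tsum_congr fun n => by rw [Real.rpow_zero, one_mul]

lemma aux_mom_one_eq (y : ℕ → ℝ) : mom 1 y = ∑' n : ℕ, ((n + 1 : ℕ) : ℝ) * y (n + 1) := by
  unfold mom
  exact tsum_congr fun n => by rw [Real.rpow_one]

lemma aux_ker_nonneg (A α β : ℝ) (hA : 0 ≤ A) (l i j : ℕ) :
    0 ≤ kerTrunc A α β l i j := by
  unfold kerTrunc
  have h1 : (0:ℝ) ≤ ((min i l : ℕ) : ℝ) ^ max α 0 := Real.rpow_nonneg (by positivity) _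
  have h2 : (0:ℝ) ≤ ((min j l : ℕ) : ℝ) ^ max α 0 := Real.rpow_nonneg (by positivity) _
  have h3 : (0:ℝ) ≤ (i:ℝ) ^ (α - max α 0) := Real.rpow_nonneg (by positivity) _
  have h4 : (0:ℝ) ≤ (j:ℝ) ^ (α - max α 0) := Real.rpow_nonneg (by positivity) _
  have h5 : (0:ℝ) ≤ (i:ℝ) ^ β := Real.rpow_nonneg (by positivity) _
  have h6 : (0:ℝ) ≤ (j:ℝ) ^ β := Real.rpow_nonneg (by positivity) _
  positivity

lemma aux_ker_symm (A α β : ℝ) (l i j : ℕ) :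
    kerTrunc A α β l i j = kerTrunc A α β l j i := by
  unfold kerTrunc; ring

lemma aux_ker_le (A α β : ℝ) (hA : 0 ≤ A) (hβ1 : β ≤ 1) (hβ0 : 0 < β)
    (l : ℕ) (hl : 1 ≤ l) {i j : ℕ} (hi : 1 ≤ i) (hj : 1 ≤ j) :
    kerTrunc A α β l i j ≤ 2 * A * (l:ℝ) ^ max α 0 * i * j := by
  have hi1 : (1:ℝ) ≤ (i:ℝ) := by exact_mod_cast hi
  have hj1 : (1:ℝ) ≤ (j:ℝ) := by exact_mod_cast hj
  have hl1 : (1:ℝ) ≤ (l:ℝ) := by exact_mod_cast hl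
  have hmin : ∀ m : ℕ, 1 ≤ m → ((min m l : ℕ) : ℝ) ^ max α 0 ≤ (l:ℝ) ^ max α 0 := by
    intro m hm
    refine Real.rpow_le_rpow (by positivity) ?_ (le_max_right _ _)
    exact_mod_cast min_le_right m l
  have hpow1 : ∀ m : ℕ, 1 ≤ m → (m:ℝ) ^ (α - max α 0) ≤ 1 := by
    intro m hm
    refine Real.rpow_le_one_of_one_le_of_nonpos (Nat.one_le_cast.mpr hm) ?_
    have := le_max_left α 0
    linarith
  have hpowβ : ∀ m : ℕ, 1 ≤ m → (m:ℝ) ^ β ≤ (m:ℝ) := by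
    intro m hm
    have h := Real.rpow_le_rpow_of_exponent_le (x := (m:ℝ)) (Nat.one_le_cast.mpr hm) hβ1
    rwa [Real.rpow_one] at h
  unfold kerTrunc
  have hLpos : (0:ℝ) ≤ (l:ℝ) ^ max α 0 := Real.rpow_nonneg (by positivity) _
  have e1 : ((min i l : ℕ) : ℝ) ^ max α 0 * (i:ℝ) ^ (α - max α 0) * (j:ℝ) ^ β ≤
      (l:ℝ) ^ max α 0 * i * j := by
    have b1 := hmin i hi
    have b2 := hpow1 i hi
    have b3 := hpowβ j hj
    have n1 : (0:ℝ) ≤ ((min i l : ℕ) : ℝ) ^ max α 0 := Real.rpow_nonneg (by positivity) _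
    have n2 : (0:ℝ) ≤ (i:ℝ) ^ (α - max α 0) := Real.rpow_nonneg (by positivity) _
    have n3 : (0:ℝ) ≤ (j:ℝ) ^ β := Real.rpow_nonneg (by positivity) _
    calc ((min i l : ℕ) : ℝ) ^ max α 0 * (i:ℝ) ^ (α - max α 0) * (j:ℝ) ^ β
        ≤ (l:ℝ) ^ max α 0 * 1 * (j:ℝ) := by
          refine mul_le_mul (mul_le_mul b1 b2 n2 hLpos) b3 n3 (by positivity)
      _ ≤ (l:ℝ) ^ max α 0 * i * j := by
          rw [mul_one]
          refine mul_le_mul_of_nonneg_right ?_ (by positivity)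
          nlinarith
  have e2 : (i:ℝ) ^ β * ((min j l : ℕ) : ℝ) ^ max α 0 * (j:ℝ) ^ (α - max α 0) ≤
      (l:ℝ) ^ max α 0 * i * j := by
    have b1 := hmin j hj
    have b2 := hpow1 j hj
    have b3 := hpowβ i hi
    have n1 : (0:ℝ) ≤ ((min j l : ℕ) : ℝ) ^ max α 0 := Real.rpow_nonneg (by positivity) _
    have n2 : (0:ℝ) ≤ (i:ℝ) ^ β := Real.rpow_nonneg (by positivity) _
    calc (i:ℝ) ^ β * ((min j l : ℕ) : ℝ) ^ max α 0 * (j:ℝ) ^ (α - max α 0)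
        ≤ (i:ℝ) * (l:ℝ) ^ max α 0 * 1 := by
          refine mul_le_mul (mul_le_mul b3 b1 n1 (by positivity)) b2
            (Real.rpow_nonneg (by positivity) _) (by positivity)
      _ ≤ (l:ℝ) ^ max α 0 * i * j := by rw [mul_one]; nlinarith [mul_nonneg (mul_nonneg hLpos (le_trans zero_le_one hi1)) (sub_nonneg.mpr hj1)]
  calc A * (((min i l : ℕ) : ℝ) ^ max α 0 * (i:ℝ) ^ (α - max α 0) * (j:ℝ) ^ β +
        (i:ℝ) ^ β * ((min j l : ℕ) : ℝ) ^ max α 0 * (j:ℝ) ^ (α - max α 0))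
      ≤ A * ((l:ℝ) ^ max α 0 * i * j + (l:ℝ) ^ max α 0 * i * j) := by
        refine mul_le_mul_of_nonneg_left (add_le_add e1 e2) hA
    _ = 2 * A * (l:ℝ) ^ max α 0 * i * j := by ring

lemma aux_interp (α : ℝ) (hα1 : α < 1) (y : ℕ → ℝ) (hy : ∀ n : ℕ, 0 ≤ y (n + 1))
    (h1 : Summable fun n : ℕ => ((n + 1 : ℕ) : ℝ) ^ (1:ℝ) * y (n + 1))
    (ρ₂ ρ₁ : ℝ) (h0 : 0 < ρ₂) (hm0 : ρ₂ ≤ mom 0 y) (hm1 : mom 1 y ≤ ρ₁) :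
    min ρ₂ (ρ₂ ^ (1 - α) * ρ₁ ^ α) ≤ mom α y := by
  have hbase : ∀ n : ℕ, (1:ℝ) ≤ ((n + 1 : ℕ) : ℝ) := fun n => by exact_mod_cast Nat.succ_le_succ (Nat.zero_le n)
  have hsum : ∀ γ : ℝ, γ ≤ 1 → Summable fun n : ℕ => ((n + 1 : ℕ) : ℝ) ^ γ * y (n + 1) := by
    intro γ hγ
    exact auxSummable_of_le hγ hy h1
  have hs0 : Summable fun n : ℕ => ((n + 1 : ℕ) : ℝ) ^ (0:ℝ) * y (n + 1) := hsum 0 zero_le_one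
  have hsα : Summable fun n : ℕ => ((n + 1 : ℕ) : ℝ) ^ α * y (n + 1) := hsum α hα1.le
  have hterm : ∀ γ : ℝ, ∀ n : ℕ, 0 ≤ ((n + 1 : ℕ) : ℝ) ^ γ * y (n + 1) := fun γ n =>
    mul_nonneg (Real.rpow_nonneg (by positivity) _) (hy n)
  rcases le_or_gt 0 α with hα0 | hα0
  · -- 0 ≤ α < 1 : mom 0 ≤ mom α
    refine le_trans (min_le_left _ _) (le_trans hm0 ?_)
    refine Summable.tsum_le_tsum (fun n => ?_) hs0 hsα
    refine mul_le_mul_of_nonneg_right ?_ (hy n)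
    rw [Real.rpow_zero]
    exact Real.one_le_rpow (hbase n) hα0
  · -- α < 0 : Hölder interpolation
    set p : ℝ := 1 - α with hp
    set q : ℝ := (1 - α) / (-α) with hq
    have hppos : 0 < p := by simp only [hp]; linarith
    have hpq : p.HolderConjugate q := by
      refine Real.holderConjugate_iff.mpr ⟨?_, ?_⟩
      · simp only [hp]; linarith
      · rw [hp, hq]
        rw [inv_div]
        rw [inv_eq_one_div]
        have hne1 : (1:ℝ) - α ≠ 0 := by linarith
        rw [← add_div, div_eq_one_iff_eq hne1]
        ring
    set F : ℕ → ℝ := fun n => (((n + 1 : ℕ) : ℝ) ^ α * y (n + 1)) ^ p⁻¹ with hF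
    set G : ℕ → ℝ := fun n => (((n + 1 : ℕ) : ℝ) ^ (1:ℝ) * y (n + 1)) ^ q⁻¹ with hG
    have hFp : ∀ n, F n ^ p = ((n + 1 : ℕ) : ℝ) ^ α * y (n + 1) := by
      intro n
      rw [hF]
      exact Real.rpow_inv_rpow (hterm α n) hpq.ne_zero
    have hGq : ∀ n, G n ^ q = ((n + 1 : ℕ) : ℝ) ^ (1:ℝ) * y (n + 1) := by
      intro n
      rw [hG]
      exact Real.rpow_inv_rpow (hterm 1 n) hpq.symm.ne_zero
    have hqinv : q⁻¹ = -α / (1 - α) := by rw [hq, inv_div]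
    have hne : (1:ℝ) - α ≠ 0 := by linarith
    have hexp0 : α * p⁻¹ + 1 * q⁻¹ = 0 := by
      rw [one_mul, hqinv, hp]
      field_simp
      ring
    have hFG : ∀ n, F n * G n = y (n + 1) := by
      intro n
      have hb : (0:ℝ) < ((n + 1 : ℕ) : ℝ) := by positivity
      show (((n + 1 : ℕ) : ℝ) ^ α * y (n + 1)) ^ p⁻¹ *
        (((n + 1 : ℕ) : ℝ) ^ (1:ℝ) * y (n + 1)) ^ q⁻¹ = y (n + 1)
      rcases eq_or_lt_of_le (hy n) with h0' | h0'
      · rw [← h0', mul_zero, Real.zero_rpow (inv_ne_zero hpq.ne_zero), zero_mul]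
      · rw [Real.mul_rpow (Real.rpow_nonneg hb.le _) (hy n),
            Real.mul_rpow (Real.rpow_nonneg hb.le _) (hy n),
            ← Real.rpow_mul hb.le, ← Real.rpow_mul hb.le, mul_mul_mul_comm,
            ← Real.rpow_add hb, ← Real.rpow_add h0', hexp0, hpq.inv_add_inv_eq_one,
            Real.rpow_zero, one_mul, Real.rpow_one]
    have hFnn : ∀ n, 0 ≤ F n := fun n => Real.rpow_nonneg (hterm α n) _
    have hGnn : ∀ n, 0 ≤ G n := fun n => Real.rpow_nonneg (hterm 1 n) _
    have hsumFp : Summable fun n => F n ^ p := by simp only [hFp]; exact hsα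
    have hsumGq : Summable fun n => G n ^ q := by simp only [hGq]; exact h1
    have key := Real.inner_le_Lp_mul_Lq_tsum_of_nonneg hpq hFnn hGnn hsumFp hsumGq
    have e0 : mom 0 y = ∑' n, F n * G n := by
      rw [aux_mom_zero_eq]
      exact tsum_congr fun n => (hFG n).symm
    have eα : (∑' n, F n ^ p) = mom α y := tsum_congr fun n => hFp n
    have e1' : (∑' n, G n ^ q) = mom 1 y := tsum_congr fun n => hGq n
    rw [eα, e1', ← e0] at key
    -- numerics
    have hSαnn : 0 ≤ mom α y := tsum_nonneg fun n => hterm α n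
    have hm01 : mom 0 y ≤ mom 1 y := by
      refine Summable.tsum_le_tsum (fun n => ?_) hs0 (hsum 1 le_rfl)
      refine mul_le_mul_of_nonneg_right ?_ (hy n)
      rw [Real.rpow_zero]
      exact Real.one_le_rpow (hbase n) zero_le_one
    have hS1pos : 0 < mom 1 y := lt_of_lt_of_le h0 (le_trans hm0 hm01)
    have hρ₁pos : 0 < ρ₁ := lt_of_lt_of_le hS1pos hm1
    have key2 : ρ₂ ≤ (mom α y) ^ (1/p) * (mom 1 y) ^ (1/q) := le_trans (le_trans hm0 le_rfl) key
    have key3 : ρ₂ ^ p ≤ mom α y * (mom 1 y) ^ (-α) := by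
      have hr := Real.rpow_le_rpow h0.le key2 hppos.le
      rw [Real.mul_rpow (Real.rpow_nonneg hSαnn _) (Real.rpow_nonneg hS1pos.le _),
          one_div, one_div, Real.rpow_inv_rpow hSαnn hpq.ne_zero,
          ← Real.rpow_mul hS1pos.le] at hr
      have : q⁻¹ * p = -α := by
        rw [hqinv, hp]
        field_simp
      rwa [this] at hr
    have hSneg : (0:ℝ) < (mom 1 y) ^ (-α) := Real.rpow_pos_of_pos hS1pos _
    have key4 : ρ₂ ^ p * (mom 1 y) ^ α ≤ mom α y := by
      have h' : (mom 1 y) ^ α = ((mom 1 y) ^ (-α))⁻¹ := by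
        rw [← Real.rpow_neg hS1pos.le, neg_neg]
      rw [h', ← div_eq_mul_inv, div_le_iff₀ hSneg]
      exact key3
    refine le_trans (min_le_right _ _) (le_trans ?_ key4)
    rw [hp]
    refine mul_le_mul_of_nonneg_left ?_ (Real.rpow_nonneg h0.le _)
    exact Real.rpow_le_rpow_of_nonpos hS1pos hm1 hα0.le

lemma aux_winTrunc_zero {l : ℕ} {win : ℕ → ℝ} {n : ℕ} (h : l ≤ n) :
    winTrunc l win (n + 1) = 0 := by
  unfold winTrunc
  rw [if_neg (by omega)]

lemma aux_summable_winTrunc (γ : ℝ) (win : ℕ → ℝ) (l : ℕ) :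
    Summable fun n : ℕ => ((n + 1 : ℕ) : ℝ) ^ γ * winTrunc l win (n + 1) := by
  refine summable_of_ne_finset_zero (s := Finset.range l) ?_
  intro n hn
  rw [aux_winTrunc_zero (by simpa using hn), mul_zero]

lemma aux_winTrunc_le {l : ℕ} {win : ℕ → ℝ} (hpos : ∀ i, 1 ≤ i → 0 ≤ win i) (n : ℕ) :
    winTrunc l win (n + 1) ≤ win (n + 1) ∧ 0 ≤ winTrunc l win (n + 1) := by
  unfold winTrunc
  split
  · exact ⟨le_rfl, hpos _ (by omega)⟩
  · exact ⟨hpos _ (by omega), le_rfl⟩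

lemma aux_mom1_wl_le {l : ℕ} {win : ℕ → ℝ} (hpos : ∀ i, 1 ≤ i → 0 ≤ win i)
    (hY1 : inY 1 win) : mom 1 (winTrunc l win) ≤ mom 1 win := by
  have hY1' : Summable fun n : ℕ => ((n + 1 : ℕ) : ℝ) ^ (1:ℝ) * win (n + 1) := by
    refine hY1.congr fun n => ?_
    rw [abs_of_nonneg (hpos _ (by omega))]
  refine Summable.tsum_le_tsum (fun n => ?_) (aux_summable_winTrunc 1 win l) hY1'
  exact mul_le_mul_of_nonneg_left (aux_winTrunc_le hpos n).1 (Real.rpow_nonneg (by positivity) _)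

lemma aux_mom0_wl_ge {l l₀ : ℕ} {win : ℕ → ℝ} (hpos : ∀ i, 1 ≤ i → 0 ≤ win i)
    (hY1 : inY 1 win) (hll0 : l₀ ≤ l)
    (htail : ∑' n : ℕ, win (l₀ + 1 + n) ≤ mom 0 win / 2) :
    mom 0 win / 2 ≤ mom 0 (winTrunc l win) := by
  have hb1 : ∀ n : ℕ, (1:ℝ) ≤ ((n + 1 : ℕ) : ℝ) := fun n => by exact_mod_cast Nat.succ_le_succ (Nat.zero_le n)
  have h0sum : Summable fun n : ℕ => win (n + 1) := by
    refine Summable.of_nonneg_of_le (fun n => hpos _ (by omega)) (fun n => ?_) hY1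
    rw [abs_of_nonneg (hpos _ (by omega)), Real.rpow_one]
    nlinarith [hpos (n+1) (by omega), hb1 n]
  have hg : Summable fun n : ℕ => win (l₀ + 1 + n) := by
    have := (summable_nat_add_iff l₀).mpr h0sum
    refine this.congr fun n => ?_
    congr 1
    omega
  -- mom 0 win decomposition at l
  have hmom0 : mom 0 win = ∑ n ∈ Finset.range l, win (n + 1) + ∑' n : ℕ, win (n + l + 1) := by
    rw [aux_mom_zero_eq]
    exact (Summable.sum_add_tsum_nat_add l h0sum).symm
  -- tail at l bounded by tail at l₀
  have htail_le : ∑' n : ℕ, win (n + l + 1) ≤ ∑' n : ℕ, win (l₀ + 1 + n) := by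
    have hdecomp := Summable.sum_add_tsum_nat_add (l - l₀) hg
    have he : ∀ n : ℕ, win (l₀ + 1 + (n + (l - l₀))) = win (n + l + 1) := by
      intro n; congr 1; omega
    have h1 : ∑' n : ℕ, win (n + l + 1) = ∑' n : ℕ, win (l₀ + 1 + (n + (l - l₀))) :=
      (tsum_congr fun n => (he n)).symm
    rw [h1, ← hdecomp]
    have : 0 ≤ ∑ i ∈ Finset.range (l - l₀), win (l₀ + 1 + i) :=
      Finset.sum_nonneg fun i _ => hpos _ (by omega)
    linarith
  have hwl : mom 0 (winTrunc l win) = ∑ n ∈ Finset.range l, win (n + 1) := by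
    rw [aux_mom_zero_eq]
    rw [tsum_eq_sum (s := Finset.range l) (fun n hn => aux_winTrunc_zero (by simpa using hn))]
    refine Finset.sum_congr rfl fun n hn => ?_
    unfold winTrunc
    rw [if_pos (by simp at hn; omega)]
  rw [hwl]
  linarith

open ENNReal in
lemma aux_pointwise
    (a : ℕ → ℕ → ℝ) (K₀ : ℝ) (hK₀ : 0 ≤ K₀)
    (hker0 : ∀ i j, 0 ≤ a i j)
    (hker : ∀ i j : ℕ, 1 ≤ i → 1 ≤ j → a i j ≤ K₀ * i * j)
    (B : ℕ → ℕ → ℕ → ℝ) (hB : HB B) (h2 : H2 B)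
    (w : ℕ → ℝ → ℝ) (τ : ℝ)
    (hw : ∀ n : ℕ, 0 ≤ w (n + 1) τ)
    (hY1 : Summable fun n : ℕ => ((n + 1 : ℕ) : ℝ) ^ (1:ℝ) * w (n + 1) τ)
    (hY2 : Summable fun n : ℕ => ((n + 1 : ℕ) : ℝ) ^ (2:ℝ) * w (n + 1) τ) :
    (∑' m : ℕ, ENNReal.ofReal (lossT a w (m + 1) τ)) ≤
      (∑' m : ℕ, ENNReal.ofReal (gainT a B w (m + 1) τ)) ∧
    (∑' m : ℕ, ENNReal.ofReal (gainT a B w (m + 1) τ)) ≤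
      ENNReal.ofReal K₀ *
        (ENNReal.ofReal (mom 2 fun i => w i τ) * ENNReal.ofReal (mom 1 fun i => w i τ) +
         ENNReal.ofReal (mom 1 fun i => w i τ) * ENNReal.ofReal (mom 2 fun i => w i τ)) := by
  set c : ℕ × ℕ → ℝ≥0∞ :=
    fun p => ENNReal.ofReal (a (p.1 + 1) (p.2 + 1) * w (p.1 + 1) τ * w (p.2 + 1) τ) with hc
  set q1 : ℕ → ℝ≥0∞ := fun j => ENNReal.ofReal (((j + 1 : ℕ) : ℝ) ^ (1:ℝ) * w (j + 1) τ) with hq1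
  set q2 : ℕ → ℝ≥0∞ := fun j => ENNReal.ofReal (((j + 1 : ℕ) : ℝ) ^ (2:ℝ) * w (j + 1) τ) with hq2
  set D : ℝ≥0∞ := ENNReal.ofReal K₀ *
    (ENNReal.ofReal (mom 2 fun i => w i τ) * ENNReal.ofReal (mom 1 fun i => w i τ) +
     ENNReal.ofReal (mom 1 fun i => w i τ) * ENNReal.ofReal (mom 2 fun i => w i τ)) with hD
  have hwpos : ∀ j : ℕ, 1 ≤ j → 0 ≤ w j τ := by
    intro j hj
    obtain ⟨n, rfl⟩ : ∃ n, j = n + 1 := ⟨j - 1, by omega⟩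
    exact hw n
  -- Step S1 : per-pair bound
  have hS1 : ∀ p : ℕ × ℕ,
      ENNReal.ofReal (((p.1 + 1 : ℕ) : ℝ) + ((p.2 + 1 : ℕ) : ℝ)) * c p ≤
      ENNReal.ofReal K₀ * (q2 p.1 * q1 p.2 + q1 p.1 * q2 p.2) := by
    rintro ⟨j, k⟩
    simp only [hc, hq1, hq2]
    have hwj := hw j
    have hwk := hw k
    have haj : 0 ≤ a (j + 1) (k + 1) := hker0 _ _
    have hJ : (0:ℝ) ≤ ((j + 1 : ℕ) : ℝ) := by positivity
    have hK : (0:ℝ) ≤ ((k + 1 : ℕ) : ℝ) := by positivity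
    have h2j : (0:ℝ) ≤ ((j + 1 : ℕ) : ℝ) ^ (2:ℝ) := Real.rpow_nonneg hJ _
    have h1j : (0:ℝ) ≤ ((j + 1 : ℕ) : ℝ) ^ (1:ℝ) := Real.rpow_nonneg hJ _
    have h2k : (0:ℝ) ≤ ((k + 1 : ℕ) : ℝ) ^ (2:ℝ) := Real.rpow_nonneg hK _
    have h1k : (0:ℝ) ≤ ((k + 1 : ℕ) : ℝ) ^ (1:ℝ) := Real.rpow_nonneg hK _
    rw [← ENNReal.ofReal_mul (by positivity),
        ← ENNReal.ofReal_mul (by positivity : (0:ℝ) ≤ ((j + 1 : ℕ) : ℝ) ^ (2:ℝ) * w (j + 1) τ),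
        ← ENNReal.ofReal_mul (by positivity : (0:ℝ) ≤ ((j + 1 : ℕ) : ℝ) ^ (1:ℝ) * w (j + 1) τ),
        ← ENNReal.ofReal_add (by positivity) (by positivity),
        ← ENNReal.ofReal_mul hK₀]
    refine ENNReal.ofReal_le_ofReal ?_
    have hk' := hker (j + 1) (k + 1) (by omega) (by omega)
    have key : a (j + 1) (k + 1) * (w (j + 1) τ * w (k + 1) τ) ≤
        K₀ * ((j + 1 : ℕ) : ℝ) * ((k + 1 : ℕ) : ℝ) * (w (j + 1) τ * w (k + 1) τ) :=
      mul_le_mul_of_nonneg_right hk' (mul_nonneg hwj hwk)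
    have e2 : ∀ x : ℝ, 0 ≤ x → x ^ (2:ℝ) = x * x := by
      intro x hx
      rw [show (2:ℝ) = ((2:ℕ):ℝ) by norm_num, Real.rpow_natCast]
      ring
    rw [Real.rpow_one, Real.rpow_one, e2 _ hJ, e2 _ hK]
    calc (((j + 1 : ℕ) : ℝ) + ((k + 1 : ℕ) : ℝ)) *
          (a (j + 1) (k + 1) * w (j + 1) τ * w (k + 1) τ)
        = (((j + 1 : ℕ) : ℝ) + ((k + 1 : ℕ) : ℝ)) *
          (a (j + 1) (k + 1) * (w (j + 1) τ * w (k + 1) τ)) := by ring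
      _ ≤ (((j + 1 : ℕ) : ℝ) + ((k + 1 : ℕ) : ℝ)) *
          (K₀ * ((j + 1 : ℕ) : ℝ) * ((k + 1 : ℕ) : ℝ) * (w (j + 1) τ * w (k + 1) τ)) :=
          mul_le_mul_of_nonneg_left key (by positivity)
      _ = K₀ * (((j + 1 : ℕ) : ℝ) * ((j + 1 : ℕ) : ℝ) * w (j + 1) τ *
            (((k + 1 : ℕ) : ℝ) * w (k + 1) τ) +
          ((j + 1 : ℕ) : ℝ) * w (j + 1) τ *
            (((k + 1 : ℕ) : ℝ) * ((k + 1 : ℕ) : ℝ) * w (k + 1) τ)) := by ring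
  -- Step S2 : summed bound
  have hS2 : (∑' p : ℕ × ℕ, ENNReal.ofReal (((p.1 + 1 : ℕ) : ℝ) + ((p.2 + 1 : ℕ) : ℝ)) * c p)
      ≤ D := by
    have hq1sum : (∑' j : ℕ, q1 j) = ENNReal.ofReal (mom 1 fun i => w i τ) := by
      rw [show (mom 1 fun i => w i τ) = ∑' n : ℕ, ((n + 1 : ℕ) : ℝ) ^ (1:ℝ) * w (n + 1) τ from rfl]
      rw [ENNReal.ofReal_tsum_of_nonneg
        (fun n => mul_nonneg (Real.rpow_nonneg (by positivity) _) (hw n)) hY1]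
    have hq2sum : (∑' j : ℕ, q2 j) = ENNReal.ofReal (mom 2 fun i => w i τ) := by
      rw [show (mom 2 fun i => w i τ) = ∑' n : ℕ, ((n + 1 : ℕ) : ℝ) ^ (2:ℝ) * w (n + 1) τ from rfl]
      rw [ENNReal.ofReal_tsum_of_nonneg
        (fun n => mul_nonneg (Real.rpow_nonneg (by positivity) _) (hw n)) hY2]
    calc (∑' p : ℕ × ℕ, ENNReal.ofReal (((p.1 + 1 : ℕ) : ℝ) + ((p.2 + 1 : ℕ) : ℝ)) * c p)
        ≤ ∑' p : ℕ × ℕ, ENNReal.ofReal K₀ * (q2 p.1 * q1 p.2 + q1 p.1 * q2 p.2) :=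
          ENNReal.tsum_le_tsum hS1
      _ = ENNReal.ofReal K₀ * ((∑' j, q2 j) * (∑' j, q1 j) + (∑' j, q1 j) * (∑' j, q2 j)) := by
          rw [ENNReal.tsum_mul_left]
          congr 1
          rw [ENNReal.tsum_prod (f := fun j k => q2 j * q1 k + q1 j * q2 k)]
          rw [tsum_congr (fun j => ENNReal.tsum_add)]
          rw [tsum_congr (fun j => by rw [ENNReal.tsum_mul_left, ENNReal.tsum_mul_left])]
          rw [ENNReal.tsum_add, ENNReal.tsum_mul_right, ENNReal.tsum_mul_right]
      _ = D := by rw [hq1sum, hq2sum, hD]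
  -- Step S3 : bounds for the B-sums
  have hS3 : ∀ p : ℕ × ℕ,
      (2 : ℝ≥0∞) ≤ (∑' m : ℕ, ENNReal.ofReal (B (p.1 + 1) (p.2 + 1) (m + 1))) ∧
      (∑' m : ℕ, ENNReal.ofReal (B (p.1 + 1) (p.2 + 1) (m + 1))) ≤
        ENNReal.ofReal (((p.1 + 1 : ℕ) : ℝ) + ((p.2 + 1 : ℕ) : ℝ)) := by
    rintro ⟨j, k⟩
    obtain ⟨hB0, -, hBvan, hBmass⟩ := hB (j + 1) (k + 1) (by omega) (by omega)
    have hsum_eq : (∑' m : ℕ, ENNReal.ofReal (B (j + 1) (k + 1) (m + 1))) =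
        ENNReal.ofReal (∑ i ∈ Finset.Ico 1 (j + 1 + (k + 1)), B (j + 1) (k + 1) i) := by
      rw [tsum_eq_sum (s := Finset.range (j + k + 1)) (fun m hm => by
        rw [hBvan (m + 1) (by simp at hm; omega), ENNReal.ofReal_zero])]
      rw [← ENNReal.ofReal_sum_of_nonneg (fun i _ => hB0 _)]
      congr 1
      rw [Finset.sum_Ico_eq_sum_range]
      have he : j + 1 + (k + 1) - 1 = j + k + 1 := by omega
      rw [he]
      exact Finset.sum_congr rfl fun i _ => by rw [Nat.add_comm 1 i]
    constructor
    · rw [hsum_eq, show (2:ℝ≥0∞) = ENNReal.ofReal (2:ℝ) by rw [ENNReal.ofReal_ofNat]]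
      exact ENNReal.ofReal_le_ofReal (h2 (j + 1) (k + 1) (by omega) (by omega))
    · rw [hsum_eq]
      refine ENNReal.ofReal_le_ofReal ?_
      calc (∑ i ∈ Finset.Ico 1 (j + 1 + (k + 1)), B (j + 1) (k + 1) i)
          ≤ ∑ i ∈ Finset.Ico 1 (j + 1 + (k + 1)), (i : ℝ) * B (j + 1) (k + 1) i := by
            refine Finset.sum_le_sum fun i hi => ?_
            refine le_mul_of_one_le_left (hB0 i) ?_
            have : 1 ≤ i := (Finset.mem_Ico.mp hi).1
            exact_mod_cast this
        _ = ((j + 1 : ℕ) : ℝ) + ((k + 1 : ℕ) : ℝ) := hBmass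
  -- per-(m,p) bound for B
  have hBle : ∀ (m : ℕ) (p : ℕ × ℕ),
      ENNReal.ofReal (B (p.1 + 1) (p.2 + 1) (m + 1)) ≤
        ENNReal.ofReal (((p.1 + 1 : ℕ) : ℝ) + ((p.2 + 1 : ℕ) : ℝ)) :=
    fun m p => le_trans (ENNReal.le_tsum m) (hS3 p).2
  -- Step S4 : gain rewrite
  have hS4 : ∀ m : ℕ, ENNReal.ofReal (gainT a B w (m + 1) τ) =
      ENNReal.ofReal (1/2) *
        ∑' p : ℕ × ℕ, ENNReal.ofReal (B (p.1 + 1) (p.2 + 1) (m + 1)) * c p := by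
    intro m
    set g : ℕ → ℝ := fun n => ∑ k ∈ Finset.Ico 1 (m + 1 + 1 + n),
        B (m + 1 + 1 + n - k) k (m + 1) * a (m + 1 + 1 + n - k) k *
          w (m + 1 + 1 + n - k) τ * w k τ with hgdef
    have htermnn : ∀ n k : ℕ, k ∈ Finset.Ico 1 (m + 1 + 1 + n) →
        0 ≤ B (m + 1 + 1 + n - k) k (m + 1) * a (m + 1 + 1 + n - k) k *
          w (m + 1 + 1 + n - k) τ * w k τ := by
      intro n k hk
      rw [Finset.mem_Ico] at hk
      have hj : 1 ≤ m + 1 + 1 + n - k := by omega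
      have hBnn := (hB (m + 1 + 1 + n - k) k hj hk.1).1 (m + 1)
      exact mul_nonneg (mul_nonneg (mul_nonneg hBnn (hker0 _ _)) (hwpos _ hj)) (hwpos _ hk.1)
    have hgnn : ∀ n, 0 ≤ g n := fun n => Finset.sum_nonneg (htermnn n)
    -- F over the product index
    set F : ℕ × ℕ → ℝ≥0∞ := fun q => if q.2 + 1 < m + 1 + 1 + q.1 then
        ENNReal.ofReal (B (m + 1 + 1 + q.1 - (q.2 + 1)) (q.2 + 1) (m + 1) *
          a (m + 1 + 1 + q.1 - (q.2 + 1)) (q.2 + 1) *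
          w (m + 1 + 1 + q.1 - (q.2 + 1)) τ * w (q.2 + 1) τ) else 0 with hFdef
    -- target as a single tsum over pairs with combined ofReal
    set G : ℕ × ℕ → ℝ≥0∞ := fun p => ENNReal.ofReal (B (p.1 + 1) (p.2 + 1) (m + 1) *
        (a (p.1 + 1) (p.2 + 1) * w (p.1 + 1) τ * w (p.2 + 1) τ)) with hGdef
    have hGsupp : ∀ p : ℕ × ℕ, G p ≠ 0 → m ≤ p.1 + p.2 := by
      rintro ⟨j, k⟩ hGp
      by_contra hc'
      push_neg at hc'
      have hvan := (hB (j + 1) (k + 1) (by omega) (by omega)).2.2.1 (m + 1) (by omega)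
      simp only [hGdef, hvan, zero_mul, ENNReal.ofReal_zero] at hGp
      exact hGp rfl
    -- Claim A : per-n identity
    have hclaimA : ∀ n : ℕ, ENNReal.ofReal (g n) = ∑' k : ℕ, F (n, k) := by
      intro n
      rw [hgdef]
      rw [ENNReal.ofReal_sum_of_nonneg (htermnn n)]
      rw [Finset.sum_Ico_eq_sum_range]
      have he : m + 1 + 1 + n - 1 = m + 1 + n := by omega
      rw [he]
      rw [tsum_eq_sum (s := Finset.range (m + 1 + n)) (f := fun k => F (n, k)) (fun k hk => by
        simp only [Finset.mem_range, not_lt] at hk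
        simp only [hFdef, if_neg (by omega : ¬ (k + 1 < m + 1 + 1 + n))])]
      refine Finset.sum_congr rfl fun k hk => ?_
      rw [Finset.mem_range] at hk
      simp only [hFdef, if_pos (by omega : k + 1 < m + 1 + 1 + n)]
      have e1 : 1 + k = k + 1 := by omega
      rw [e1]
    -- Claim B : bijection between F and G sums
    have hclaimB : (∑' q : ℕ × ℕ, F q) = ∑' p : ℕ × ℕ, G p := by
      refine tsum_eq_tsum_of_ne_zero_bij
        (fun x => (x.1.1 + x.1.2 - m, x.1.2)) ?_ ?_ ?_
      · rintro ⟨⟨j, k⟩, hx⟩ ⟨⟨j', k'⟩, hx'⟩ hEq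
        have h1 := hGsupp _ hx
        have h2' := hGsupp _ hx'
        simp only [Prod.mk.injEq] at hEq ⊢
        exact Subtype.ext (by simp only [Prod.mk.injEq]; constructor <;> omega)
      · rintro ⟨n, k⟩ hFq
        simp only [Function.mem_support, hFdef] at hFq
        by_cases hcond : k + 1 < m + 1 + 1 + n
        · rw [if_pos hcond] at hFq
          have he1 : m + 1 + 1 + n - (k + 1) = (m + n - k) + 1 := by omega
          rw [he1] at hFq
          have hGne : G (m + n - k, k) ≠ 0 := by
            simp only [hGdef]
            intro hzero
            apply hFq
            rw [← hzero]
            congr 1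
            ring
          refine ⟨⟨(m + n - k, k), hGne⟩, ?_⟩
          have h1 : m + n - k + k - m = n := by omega
          simp [h1]
        · rw [if_neg hcond] at hFq
          exact absurd rfl hFq
      · rintro ⟨⟨j, k⟩, hx⟩
        have hjk := hGsupp _ hx
        simp only at hjk ⊢
        simp only [hFdef, hGdef]
        rw [if_pos (by omega : k + 1 < m + 1 + 1 + (j + k - m))]
        have he1 : m + 1 + 1 + (j + k - m) - (k + 1) = j + 1 := by omega
        rw [he1]
        exact congrArg ENNReal.ofReal (by ring)
    -- identify the combined-ofReal target with the stated one
    have hGT : (∑' p : ℕ × ℕ, G p) =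
        ∑' p : ℕ × ℕ, ENNReal.ofReal (B (p.1 + 1) (p.2 + 1) (m + 1)) * c p := by
      refine tsum_congr fun p => ?_
      simp only [hGdef, hc]
      rw [ENNReal.ofReal_mul ((hB (p.1 + 1) (p.2 + 1) (by omega) (by omega)).1 (m + 1))]
    -- finiteness, hence real summability of g
    have hfin : (∑' p : ℕ × ℕ, ENNReal.ofReal (B (p.1 + 1) (p.2 + 1) (m + 1)) * c p) ≠ ⊤ := by
      refine ne_top_of_le_ne_top ?_ (le_trans
        (ENNReal.tsum_le_tsum fun p => mul_le_mul_left (hBle m p) _) hS2)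
      rw [hD]
      exact ENNReal.mul_ne_top ENNReal.ofReal_ne_top (ENNReal.add_ne_top.mpr
        ⟨ENNReal.mul_ne_top ENNReal.ofReal_ne_top ENNReal.ofReal_ne_top,
         ENNReal.mul_ne_top ENNReal.ofReal_ne_top ENNReal.ofReal_ne_top⟩)
    have hofg : (∑' n : ℕ, ENNReal.ofReal (g n)) =
        ∑' p : ℕ × ℕ, ENNReal.ofReal (B (p.1 + 1) (p.2 + 1) (m + 1)) * c p := by
      rw [tsum_congr hclaimA, ← ENNReal.tsum_prod (f := fun n k => F (n, k)), hclaimB, hGT]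
    have hgsum : Summable g := by
      have h1 : (∑' n : ℕ, ENNReal.ofReal (g n)) ≠ ⊤ := by rw [hofg]; exact hfin
      have h2' := ENNReal.summable_toReal h1
      refine h2'.congr fun n => ?_
      exact ENNReal.toReal_ofReal (hgnn n)
    -- assemble
    rw [show gainT a B w (m + 1) τ = (1/2) * ∑' n, g n from rfl]
    rw [ENNReal.ofReal_mul (by norm_num : (0:ℝ) ≤ 1/2)]
    rw [ENNReal.ofReal_tsum_of_nonneg hgnn hgsum, hofg]
  -- Step S5 : loss rewrite
  have hS5 : ∀ m : ℕ, ENNReal.ofReal (lossT a w (m + 1) τ) = ∑' n : ℕ, c (m, n) := by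
    intro m
    have hnn : ∀ n : ℕ, 0 ≤ a (m + 1) (n + 1) * w (m + 1) τ * w (n + 1) τ := fun n =>
      mul_nonneg (mul_nonneg (hker0 _ _) (hw m)) (hw n)
    have hsum : Summable fun n : ℕ => a (m + 1) (n + 1) * w (m + 1) τ * w (n + 1) τ := by
      refine Summable.of_nonneg_of_le hnn (fun n => ?_) (hY1.mul_left (K₀ * ((m + 1 : ℕ) : ℝ) * w (m + 1) τ))
      have hk' := hker (m + 1) (n + 1) (by omega) (by omega)
      calc a (m + 1) (n + 1) * w (m + 1) τ * w (n + 1) τ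
          ≤ (K₀ * ((m + 1 : ℕ) : ℝ) * ((n + 1 : ℕ) : ℝ)) * w (m + 1) τ * w (n + 1) τ := by
            refine mul_le_mul_of_nonneg_right (mul_le_mul_of_nonneg_right hk' (hw m)) (hw n)
        _ = K₀ * ((m + 1 : ℕ) : ℝ) * w (m + 1) τ * (((n + 1 : ℕ) : ℝ) ^ (1:ℝ) * w (n + 1) τ) := by
            rw [Real.rpow_one]; ring
    rw [show lossT a w (m + 1) τ =
      ∑' n : ℕ, a (m + 1) (n + 1) * w (m + 1) τ * w (n + 1) τ from rfl]
    rw [ENNReal.ofReal_tsum_of_nonneg hnn hsum]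
  -- assemble
  have hGsum : (∑' m : ℕ, ENNReal.ofReal (gainT a B w (m + 1) τ)) =
      ENNReal.ofReal (1/2) *
        ∑' p : ℕ × ℕ, (∑' m : ℕ, ENNReal.ofReal (B (p.1 + 1) (p.2 + 1) (m + 1))) * c p := by
    rw [tsum_congr hS4, ENNReal.tsum_mul_left]
    congr 1
    rw [ENNReal.tsum_comm (f := fun (m : ℕ) (p : ℕ × ℕ) =>
      ENNReal.ofReal (B (p.1 + 1) (p.2 + 1) (m + 1)) * c p)]
    exact tsum_congr fun p => ENNReal.tsum_mul_right
  have hLsum : (∑' m : ℕ, ENNReal.ofReal (lossT a w (m + 1) τ)) = ∑' p : ℕ × ℕ, c p := by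
    rw [tsum_congr hS5]
    exact (ENNReal.tsum_prod (f := fun m n => c (m, n))).symm
  constructor
  · rw [hGsum, hLsum]
    calc (∑' p : ℕ × ℕ, c p) = ENNReal.ofReal (1/2) * ∑' p : ℕ × ℕ, 2 * c p := by
          rw [ENNReal.tsum_mul_left, ← mul_assoc]
          have h12 : ENNReal.ofReal (1/2) * 2 = 1 := by
            rw [ENNReal.ofReal_div_of_pos (by norm_num), ENNReal.ofReal_one, ENNReal.ofReal_ofNat]
            exact ENNReal.div_mul_cancel (by norm_num) (by norm_num)
          rw [h12, one_mul]
      _ ≤ ENNReal.ofReal (1/2) *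
          ∑' p : ℕ × ℕ, (∑' m : ℕ, ENNReal.ofReal (B (p.1 + 1) (p.2 + 1) (m + 1))) * c p := by
          refine mul_le_mul_right (ENNReal.tsum_le_tsum fun p => ?_) _
          exact mul_le_mul_left (hS3 p).1 _
  · rw [hGsum]
    calc ENNReal.ofReal (1/2) *
        ∑' p : ℕ × ℕ, (∑' m : ℕ, ENNReal.ofReal (B (p.1 + 1) (p.2 + 1) (m + 1))) * c p
        ≤ 1 * ∑' p : ℕ × ℕ, ENNReal.ofReal (((p.1 + 1 : ℕ) : ℝ) + ((p.2 + 1 : ℕ) : ℝ)) * c p := by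
          refine mul_le_mul' (ENNReal.ofReal_le_one.mpr (by norm_num))
            (ENNReal.tsum_le_tsum fun p => mul_le_mul_left (hS3 p).2 _)
      _ ≤ D := by rw [one_mul]; exact hS2

open ENNReal in
lemma aux_mom0_mono
    (A α β : ℝ) (hA : 0 < A) (hβ1 : β ≤ 1) (hβ0 : 0 < β)
    (B : ℕ → ℕ → ℕ → ℝ) (hB : HB B) (h2 : H2 B)
    (l : ℕ) (hl1 : 1 ≤ l)
    (wl : ℕ → ℝ) (hwlsum : Summable fun n : ℕ => wl (n + 1))
    (w : ℕ → ℝ → ℝ)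
    (hsol : IsSol (kerTrunc A α β l) B wl w)
    (hmc : MassConserving wl w)
    (hloc : LocBddMoments w) :
    ∀ t : ℝ, 0 ≤ t → mom 0 wl ≤ mom 0 fun i => w i t := by
  obtain ⟨hpos, hcont, hinit, heq⟩ := hsol
  intro t ht
  rcases eq_or_lt_of_le ht with h0 | htpos
  · have he : (mom 0 fun i => w i t) = mom 0 wl := by
      rw [aux_mom_zero_eq, aux_mom_zero_eq]
      exact tsum_congr fun n => by rw [← h0, hinit (n + 1) (by omega)]
    rw [he]
  set a := kerTrunc A α β l with ha
  set K₀ : ℝ := 2 * A * (l : ℝ) ^ max α 0 with hK₀def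
  have hlp : (0:ℝ) ≤ (l:ℝ) ^ max α 0 := Real.rpow_nonneg (by positivity) _
  have hK₀ : 0 ≤ K₀ := by rw [hK₀def]; positivity
  have hker0 : ∀ i j, 0 ≤ a i j := fun i j => aux_ker_nonneg A α β hA.le l i j
  have hker : ∀ i j : ℕ, 1 ≤ i → 1 ≤ j → a i j ≤ K₀ * i * j := fun i j hi hj =>
    aux_ker_le A α β hA.le hβ1 hβ0 l hl1 hi hj
  obtain ⟨C₂, hC₂⟩ := hloc 2 one_lt_two t htpos
  set C₁ : ℝ := mom 1 wl with hC₁def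
  set D₀ : ℝ≥0∞ := ENNReal.ofReal K₀ *
    (ENNReal.ofReal C₂ * ENNReal.ofReal C₁ + ENNReal.ofReal C₁ * ENNReal.ofReal C₂) with hD₀def
  have hD₀ne : D₀ ≠ ⊤ := by
    rw [hD₀def]
    exact ENNReal.mul_ne_top ENNReal.ofReal_ne_top (ENNReal.add_ne_top.mpr
      ⟨ENNReal.mul_ne_top ENNReal.ofReal_ne_top ENNReal.ofReal_ne_top,
       ENNReal.mul_ne_top ENNReal.ofReal_ne_top ENNReal.ofReal_ne_top⟩)
  have hpt : ∀ τ : ℝ, τ ∈ Set.Icc (0:ℝ) t →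
      ((∑' m : ℕ, ENNReal.ofReal (lossT a w (m + 1) τ)) ≤
        (∑' m : ℕ, ENNReal.ofReal (gainT a B w (m + 1) τ)) ∧
      (∑' m : ℕ, ENNReal.ofReal (gainT a B w (m + 1) τ)) ≤ D₀) := by
    intro τ hτ
    have hτ0 : 0 ≤ τ := hτ.1
    have hw : ∀ n : ℕ, 0 ≤ w (n + 1) τ := fun n => hpos (n + 1) (by omega) τ hτ0
    have hY1 : Summable fun n : ℕ => ((n + 1 : ℕ) : ℝ) ^ (1:ℝ) * w (n + 1) τ :=
      ((hmc τ hτ0).1).congr fun n => by rw [abs_of_nonneg (hw n)]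
    have h2' := hC₂ τ hτ
    have hY2 : Summable fun n : ℕ => ((n + 1 : ℕ) : ℝ) ^ (2:ℝ) * w (n + 1) τ :=
      (h2'.1).congr fun n => by rw [abs_of_nonneg (hw n)]
    obtain ⟨hle, hbd⟩ := aux_pointwise a K₀ hK₀ hker0 hker B hB h2 w τ hw hY1 hY2
    refine ⟨hle, le_trans hbd ?_⟩
    rw [hD₀def, (hmc τ hτ0).2, ← hC₁def]
    gcongr <;> exact h2'.2
  have hint := fun m : ℕ => heq (m + 1) (by omega) t htpos
  set μ := volume.restrict (Set.Ioc (0:ℝ) t) with hμ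
  have haeIoc : ∀ᵐ τ ∂μ, τ ∈ Set.Ioc (0:ℝ) t := ae_restrict_mem measurableSet_Ioc
  have hGmeas : ∀ m : ℕ, AEMeasurable (fun τ => ENNReal.ofReal (gainT a B w (m + 1) τ)) μ :=
    fun m => ENNReal.measurable_ofReal.comp_aemeasurable
      ((hint m).2.1.aestronglyMeasurable.aemeasurable)
  have hLmeas : ∀ m : ℕ, AEMeasurable (fun τ => ENNReal.ofReal (lossT a w (m + 1) τ)) μ :=
    fun m => ENNReal.measurable_ofReal.comp_aemeasurable
      ((hint m).1.aestronglyMeasurable.aemeasurable)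
  have hG_l : (∑' m : ℕ, ∫⁻ τ, ENNReal.ofReal (gainT a B w (m + 1) τ) ∂μ) =
      ∫⁻ τ, (∑' m : ℕ, ENNReal.ofReal (gainT a B w (m + 1) τ)) ∂μ := (lintegral_tsum hGmeas).symm
  have hL_l : (∑' m : ℕ, ∫⁻ τ, ENNReal.ofReal (lossT a w (m + 1) τ) ∂μ) =
      ∫⁻ τ, (∑' m : ℕ, ENNReal.ofReal (lossT a w (m + 1) τ)) ∂μ := (lintegral_tsum hLmeas).symm
  have hGL : (∑' m : ℕ, ∫⁻ τ, ENNReal.ofReal (lossT a w (m + 1) τ) ∂μ) ≤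
      (∑' m : ℕ, ∫⁻ τ, ENNReal.ofReal (gainT a B w (m + 1) τ) ∂μ) := by
    rw [hG_l, hL_l]
    refine lintegral_mono_ae ?_
    filter_upwards [haeIoc] with τ hτ
    exact (hpt τ ⟨hτ.1.le, hτ.2⟩).1
  have hGtop : (∑' m : ℕ, ∫⁻ τ, ENNReal.ofReal (gainT a B w (m + 1) τ) ∂μ) ≤
      D₀ * ENNReal.ofReal t := by
    rw [hG_l]
    calc (∫⁻ τ, (∑' m : ℕ, ENNReal.ofReal (gainT a B w (m + 1) τ)) ∂μ)
        ≤ ∫⁻ _, D₀ ∂μ := by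
          refine lintegral_mono_ae ?_
          filter_upwards [haeIoc] with τ hτ
          exact (hpt τ ⟨hτ.1.le, hτ.2⟩).2
      _ = D₀ * ENNReal.ofReal t := by
          rw [lintegral_const, hμ, Measure.restrict_apply_univ, Real.volume_Ioc, sub_zero]
  have hGne : (∑' m : ℕ, ∫⁻ τ, ENNReal.ofReal (gainT a B w (m + 1) τ) ∂μ) ≠ ⊤ :=
    ne_top_of_le_ne_top (ENNReal.mul_ne_top hD₀ne ENNReal.ofReal_ne_top) hGtop
  have hLne : (∑' m : ℕ, ∫⁻ τ, ENNReal.ofReal (lossT a w (m + 1) τ) ∂μ) ≠ ⊤ :=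
    ne_top_of_le_ne_top hGne hGL
  -- nonnegativity of integrands
  have hgainT_nn : ∀ (m : ℕ) (τ : ℝ), 0 ≤ τ → 0 ≤ gainT a B w (m + 1) τ := by
    intro m τ hτ
    have hwpos : ∀ j, 1 ≤ j → 0 ≤ w j τ := fun j hj => hpos j hj τ hτ
    unfold gainT
    refine mul_nonneg (by norm_num) (tsum_nonneg fun n => Finset.sum_nonneg fun k hk => ?_)
    rw [Finset.mem_Ico] at hk
    have hj : 1 ≤ m + 1 + 1 + n - k := by omega
    exact mul_nonneg (mul_nonneg (mul_nonneg ((hB _ _ hj hk.1).1 (m + 1)) (hker0 _ _))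
      (hwpos _ hj)) (hwpos _ hk.1)
  have hlossT_nn : ∀ (m : ℕ) (τ : ℝ), 0 ≤ τ → 0 ≤ lossT a w (m + 1) τ := by
    intro m τ hτ
    have hwpos : ∀ j, 1 ≤ j → 0 ≤ w j τ := fun j hj => hpos j hj τ hτ
    unfold lossT
    exact tsum_nonneg fun n => mul_nonneg (mul_nonneg (hker0 _ _) (hwpos _ (by omega)))
      (hwpos _ (by omega))
  -- real integrals
  set gi : ℕ → ℝ := fun m => ∫ τ in Set.Ioc (0:ℝ) t, gainT a B w (m + 1) τ with hgi
  set li : ℕ → ℝ := fun m => ∫ τ in Set.Ioc (0:ℝ) t, lossT a w (m + 1) τ with hli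
  have hGint : ∀ m : ℕ, gi m = (∫⁻ τ, ENNReal.ofReal (gainT a B w (m + 1) τ) ∂μ).toReal := by
    intro m
    rw [hgi]
    refine integral_eq_lintegral_of_nonneg_ae ?_ (hint m).2.1.aestronglyMeasurable
    filter_upwards [haeIoc] with τ hτ
    exact hgainT_nn m τ hτ.1.le
  have hLint : ∀ m : ℕ, li m = (∫⁻ τ, ENNReal.ofReal (lossT a w (m + 1) τ) ∂μ).toReal := by
    intro m
    rw [hli]
    refine integral_eq_lintegral_of_nonneg_ae ?_ (hint m).1.aestronglyMeasurable
    filter_upwards [haeIoc] with τ hτ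
    exact hlossT_nn m τ hτ.1.le
  have hgisum : Summable gi := (ENNReal.summable_toReal hGne).congr fun m => (hGint m).symm
  have hlisum : Summable li := (ENNReal.summable_toReal hLne).congr fun m => (hLint m).symm
  have hgi_nn : ∀ m, 0 ≤ gi m := fun m => by
    rw [hGint m]; exact ENNReal.toReal_nonneg
  have hli_nn : ∀ m, 0 ≤ li m := fun m => by
    rw [hLint m]; exact ENNReal.toReal_nonneg
  have htot : (∑' m, li m) ≤ ∑' m, gi m := by
    rw [tsum_congr hGint, tsum_congr hLint, ← ENNReal.tsum_toReal_eq
      (fun m => ne_top_of_le_ne_top hGne (ENNReal.le_tsum m)), ← ENNReal.tsum_toReal_eq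
      (fun m => ne_top_of_le_ne_top hLne (ENNReal.le_tsum m))]
    exact ENNReal.toReal_mono hGne hGL
  -- the equation
  have hw_eq : ∀ m : ℕ, w (m + 1) t = wl (m + 1) + (gi m - li m) := by
    intro m
    rw [hgi, hli, ← integral_sub (hint m).2.1 (hint m).1]
    exact (hint m).2.2
  -- moment of order 0 at time t
  have hwt_nn : ∀ n : ℕ, 0 ≤ w (n + 1) t := fun n => hpos _ (by omega) t ht
  have hwt_sum : Summable fun n : ℕ => w (n + 1) t := by
    refine Summable.of_nonneg_of_le hwt_nn (fun n => ?_) ((hmc t ht).1)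
    rw [abs_of_nonneg (hwt_nn n), Real.rpow_one]
    nlinarith [hwt_nn n, (by exact_mod_cast Nat.succ_le_succ (Nat.zero_le n) : (1:ℝ) ≤ ((n + 1 : ℕ) : ℝ))]
  have key : ∀ N : ℕ, (∑ n ∈ Finset.range N, wl (n + 1)) +
      (∑ n ∈ Finset.range N, gi n) - (∑' n, gi n) ≤ mom 0 fun i => w i t := by
    intro N
    have h1 : (∑ n ∈ Finset.range N, w (n + 1) t) ≤ mom 0 fun i => w i t := by
      rw [aux_mom_zero_eq]
      exact Summable.sum_le_tsum (Finset.range N) (fun n _ => hwt_nn n) hwt_sum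
    have h2' : (∑ n ∈ Finset.range N, w (n + 1) t) =
        (∑ n ∈ Finset.range N, wl (n + 1)) + ((∑ n ∈ Finset.range N, gi n) -
          (∑ n ∈ Finset.range N, li n)) := by
      rw [Finset.sum_congr rfl fun n _ => hw_eq n]
      rw [Finset.sum_add_distrib, Finset.sum_sub_distrib]
    have h3 : (∑ n ∈ Finset.range N, li n) ≤ ∑' n, li n :=
      Summable.sum_le_tsum (Finset.range N) (fun n _ => hli_nn n) hlisum
    linarith [htot]
  have hlim : Filter.Tendsto (fun N : ℕ => (∑ n ∈ Finset.range N, wl (n + 1)) +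
      (∑ n ∈ Finset.range N, gi n) - (∑' n, gi n)) Filter.atTop
      (nhds ((∑' n, wl (n + 1)) + (∑' n, gi n) - (∑' n, gi n))) := by
    exact ((hwlsum.hasSum.tendsto_sum_nat.add hgisum.hasSum.tendsto_sum_nat).sub tendsto_const_nhds)
  have := le_of_tendsto hlim (Filter.Eventually.of_forall key)
  rw [aux_mom_zero_eq]
  linarith

/-- Lemma 3.3: lower bounds for the moments of order `1`, `0` and `α` of the truncated
solutions. -/
theorem stmt10 (A α β : ℝ) (hA : 0 < A) (hαβ : α ≤ β) (hβ1 : β ≤ 1) (hβ0 : 0 < β) (hα1 : α < 1)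
    (B : ℕ → ℕ → ℕ → ℝ) (hB : HB B) (h2 : H2 B)
    (win : ℕ → ℝ) (hpos : ∀ i, 1 ≤ i → 0 ≤ win i) (hY1 : inY 1 win)
    (hne : ∃ i, 1 ≤ i ∧ win i ≠ 0)
    (ρ₀ ρ₁ : ℝ) (hρ₀ : 0 < ρ₀) (hρ : ρ₀ ≤ ρ₁)
    (hM1 : mom 1 win ≤ ρ₁) (hM0 : ρ₀ ≤ mom 0 win)
    (l₀ : ℕ) (hl₀ : 1 ≤ l₀)
    (htail : ∑' n : ℕ, win (l₀ + 1 + n) ≤ mom 0 win / 2)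
    (l : ℕ) (hl : l₀ ≤ l)
    (w : ℕ → ℝ → ℝ)
    (hsol : IsSol (kerTrunc A α β l) B (winTrunc l win) w)
    (hmc : MassConserving (winTrunc l win) w)
    (hloc : LocBddMoments w) :
    ∀ t : ℝ, 0 ≤ t →
      (mom 1 (fun i => w i t) = mom 1 (winTrunc l win) ∧ mom 1 (winTrunc l win) ≤ ρ₁) ∧
      (mom 0 (winTrunc l win) ≤ mom 0 (fun i => w i t) ∧
        ρ₀ / 2 ≤ mom 0 (winTrunc l win)) ∧
      (min (ρ₀ / 2) ((ρ₀ / 2) ^ (1 - α) * ρ₁ ^ α) ≤ mom α (fun i => w i t) ∧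
        0 < min (ρ₀ / 2) ((ρ₀ / 2) ^ (1 - α) * ρ₁ ^ α)) := by
  intro t ht
  have hl1 : 1 ≤ l := le_trans hl₀ hl
  have hwl_nonneg : ∀ n : ℕ, 0 ≤ winTrunc l win (n + 1) := fun n => (aux_winTrunc_le hpos n).2
  have hA1 : mom 1 (winTrunc l win) ≤ ρ₁ := le_trans (aux_mom1_wl_le hpos hY1) hM1
  have hA2 : ρ₀ / 2 ≤ mom 0 (winTrunc l win) := by
    have := aux_mom0_wl_ge hpos hY1 hl htail
    linarith
  have hmc_t := hmc t ht
  have hwlsum : Summable fun n : ℕ => winTrunc l win (n + 1) := by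
    refine (aux_summable_winTrunc 0 win l).congr fun n => ?_
    rw [Real.rpow_zero, one_mul]
  have hB0 := aux_mom0_mono A α β hA hβ1 hβ0 B hB h2 l hl1 (winTrunc l win) hwlsum w
    hsol hmc hloc t ht
  have hm0t : ρ₀ / 2 ≤ mom 0 fun i => w i t := le_trans hA2 hB0
  have hwt_nn : ∀ n : ℕ, 0 ≤ w (n + 1) t := fun n => hsol.1 _ (by omega) t ht
  have hY1t : Summable fun n : ℕ => ((n + 1 : ℕ) : ℝ) ^ (1:ℝ) * w (n + 1) t :=
    hmc_t.1.congr fun n => by rw [abs_of_nonneg (hwt_nn n)]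
  have hm1t : mom 1 (fun i => w i t) ≤ ρ₁ := by rw [hmc_t.2]; exact hA1
  have hαpos : 0 < min (ρ₀ / 2) ((ρ₀ / 2) ^ (1 - α) * ρ₁ ^ α) := by
    have h1 : 0 < ρ₀ / 2 := by linarith
    have hρ1 : 0 < ρ₁ := lt_of_lt_of_le hρ₀ hρ
    exact lt_min h1 (mul_pos (Real.rpow_pos_of_pos h1 _) (Real.rpow_pos_of_pos hρ1 _))
  have hintp := aux_interp α hα1 (fun i => w i t) hwt_nn hY1t (ρ₀ / 2) ρ₁ (by linarith) hm0t hm1t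
  exact ⟨⟨hmc_t.2, hA1⟩, ⟨hB0, hA2⟩, hintp, hαpos⟩
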